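/- Let a ≠ 0 and 4a³ + 27b² ≠ 0, with A₂ = k[x,y]/(y² - x³ - ax - b) and ∂₂ = -2y·∂/∂x - (3x² + a)·∂/∂y. Then the cokernel of ∂₂ : A₂ → A₂ is a 2-dimensional k-vector space with basis given by the images of 1 and y². -/

import Mathlib

open MvPolynomial

noncomputable section
namespace CokerAux

variable {k : Type*} [Field k] [CharZero k] (a b : k)

/-- reduction values of x^n in the cokernel, in coordinates w.r.t. (1, x). -/
def rr : ℕ → k × k
  | 0 => (1, 0)
  | 1 => (0, 1)
  | 2 => (-(a / 3), 0)
  | n + 3 => (-((2*(n:k)+3) * a) / (2*(n:k)+5)) • rr (n+1) + (-((2*(n:k)+2) * b) / (2*(n:k)+5)) • rr n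

lemma keyR (n : ℕ) :
    (2*(n:k)+3) • rr a b (n+2) + ((2*(n:k)+1) * a) • rr a b n + ((2*(n:k)) * b) • rr a b (n-1) = 0 := by
  match n with
  | 0 =>
    simp only [Nat.cast_zero, rr]
    ext <;> simp <;> ring
  | (m+1) =>
    have h5 : (2*(m:k)+5) ≠ 0 := by
      have : ((2*m+5 : ℕ) : k) ≠ 0 := Nat.cast_ne_zero.mpr (by omega)
      push_cast at this; exact this
    rw [show (m+1)+2 = m+3 from rfl, rr, show (m+1) - 1 = m from rfl]
    push_cast
    rw [smul_add, smul_smul, smul_smul]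
    rw [show (2 * ((m:k) + 1) + 3) * (-((2 * ↑m + 3) * a) / (2 * ↑m + 5)) = -((2 * ((m:k)+1) + 1) * a) by
      field_simp; ring]
    rw [show (2 * ((m:k) + 1) + 3) * (-((2 * ↑m + 2) * b) / (2 * ↑m + 5)) = -(2 * ((m:k)+1) * b) by
      field_simp; ring]
    module

end CokerAux

section More
namespace CokerAux
variable {k : Type*} [Field k] [CharZero k] (a b : k)

/-- reduction values of x^i q^t where q = x^3+ax+b. -/
def sE : ℕ → ℕ → k × k
  | 0, i => rr a b i
  | t+1, i => sE t (i+3) + a • sE t (i+1) + b • sE t i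

lemma keyE (t i : ℕ) :
    (2*(i:k)) • sE a b (t+1) (i-1)
      + (2*(t:k)+1) • ((3:k) • sE a b t (i+2) + a • sE a b t i) = 0 := by
  induction t generalizing i with
  | zero =>
    match i with
    | 0 =>
      have h := keyR a b 0
      simp only [sE, Nat.cast_zero] at h ⊢
      push_cast at h ⊢
      linear_combination (norm := module) h
    | (m+1) =>
      have h := keyR a b (m+1)
      simp only [sE, Nat.cast_zero] at h ⊢
      rw [show (m+1) - 1 = m from rfl] at h ⊢
      rw [show m + 3 = (m+1)+2 from rfl, show m+1 = (m)+1 from rfl]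
      push_cast at h ⊢
      linear_combination (norm := module) h
  | succ t ih =>
    match i with
    | 0 =>
      have h3 := ih 3
      have h1 := ih 1
      have h0 := ih 0
      simp only [sE] at h3 h1 h0 ⊢
      push_cast at h3 h1 h0 ⊢
      linear_combination (norm := module) h3 + a • h1 + b • h0
    | (m+1) =>
      have h3 := ih (m+4)
      have h1 := ih (m+2)
      have h0 := ih (m+1)
      simp only [sE] at h3 h1 h0 ⊢
      rw [show (m+4) - 1 = m+3 from rfl] at h3
      rw [show (m+2) - 1 = m+1 from rfl] at h1
      rw [show (m+1) - 1 = m from rfl] at h0 ⊢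
      push_cast at h3 h1 h0 ⊢
      linear_combination (norm := module) h3 + a • h1 + b • h0

end CokerAux
end More

section More2
namespace CokerAux
variable {k : Type*} [Field k] [CharZero k] (a b : k)

def ee (i j : ℕ) : k × k := if 2 ∣ j then sE a b (j/2) i else 0

lemma ee_even (t i : ℕ) : ee a b i (2*t) = sE a b t i := by
  simp [ee, Nat.mul_div_cancel_left]

lemma ee_zero (i : ℕ) : ee a b i 0 = rr a b i := by
  simpa [sE] using ee_even a b 0 i

lemma ee_odd (t i : ℕ) : ee a b i (2*t+1) = 0 := by
  simp [ee, Nat.two_dvd_ne_zero.mpr, Nat.succ_mod_two_eq_one_iff]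

lemma ee_step (i j : ℕ) :
    ee a b i (j+2) = ee a b (i+3) j + a • ee a b (i+1) j + b • ee a b i j := by
  rcases Nat.even_or_odd j with ⟨t, ht⟩ | ⟨t, ht⟩
  · subst ht
    rw [show t + t = 2*t by ring, show 2*t+2 = 2*(t+1) by ring]
    rw [ee_even, ee_even, ee_even, ee_even]
    rfl
  · subst ht
    rw [show 2*t+1+2 = 2*(t+1)+1 by ring]
    rw [ee_odd, ee_odd, ee_odd, ee_odd]
    simp

abbrev P2 (k : Type*) [Field k] := MvPolynomial (Fin 2) k

/-- the reduction functional -/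
def red : P2 k →ₗ[k] k × k :=
  (basisMonomials (Fin 2) k).constr ℕ fun d => ee a b (d 0) (d 1)

lemma red_monomial (d : Fin 2 →₀ ℕ) : red a b (monomial d (1:k)) = ee a b (d 0) (d 1) := by
  have := Module.Basis.constr_basis (basisMonomials (Fin 2) k) ℕ (fun d => ee a b (d 0) (d 1)) d
  rwa [coe_basisMonomials] at this

lemma monomial_eq_prod (d : Fin 2 →₀ ℕ) :
    monomial d (1:k) = X 0 ^ (d 0) * X 1 ^ (d 1) := by
  have hd : d = Finsupp.single 0 (d 0) + Finsupp.single 1 (d 1) := by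
    ext x
    fin_cases x <;> simp
  rw [X_pow_eq_monomial, X_pow_eq_monomial, monomial_mul, one_mul]
  exact congrArg (fun u => monomial u (1:k)) hd

lemma red_pow (i j : ℕ) : red a b (X 0 ^ i * X 1 ^ j : P2 k) = ee a b i j := by
  have hd : ((Finsupp.single (0 : Fin 2) i + Finsupp.single 1 j) : Fin 2 →₀ ℕ) 0 = i := by simp
  have hd' : ((Finsupp.single (0 : Fin 2) i + Finsupp.single 1 j) : Fin 2 →₀ ℕ) 1 = j := by simp
  have := red_monomial a b (Finsupp.single 0 i + Finsupp.single 1 j)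
  rw [hd, hd'] at this
  rw [← this, monomial_eq_prod, hd, hd']

end CokerAux
end More2

section More3
namespace CokerAux
variable {k : Type*} [Field k] [CharZero k] (a b : k)

def FF : P2 k := X 1 ^ 2 - X 0 ^ 3 - C a * X 0 - C b

lemma red_mul_FF (p : P2 k) : red a b (p * FF a b) = 0 := by
  induction p using MvPolynomial.induction_on' with
  | add p q hp hq => rw [add_mul, map_add, hp, hq, add_zero]
  | monomial d c =>
    have h1 : (monomial d c : P2 k) * FF a b = c • ((monomial d (1:k)) * FF a b) := by
      rw [smul_eq_C_mul, ← mul_assoc, ← smul_eq_C_mul, smul_monomial, smul_eq_mul, mul_one]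
    rw [h1, map_smul, monomial_eq_prod]
    have expand : (X 0 ^ (d 0) * X 1 ^ (d 1) : P2 k) * FF a b
        = X 0 ^ (d 0) * X 1 ^ (d 1 + 2) - X 0 ^ (d 0 + 3) * X 1 ^ (d 1)
          - a • (X 0 ^ (d 0 + 1) * X 1 ^ (d 1)) - b • (X 0 ^ (d 0) * X 1 ^ (d 1)) := by
      rw [smul_eq_C_mul, smul_eq_C_mul]; unfold FF; ring
    rw [expand, map_sub, map_sub, map_sub, map_smul, map_smul, red_pow, red_pow, red_pow,
      red_pow, ee_step]
    rw [show (0 : k × k) = c • (0 : k × k) by simp]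
    congr 1
    module

def D' : Derivation k (P2 k) (P2 k) :=
  mkDerivation k ![(-2 : P2 k) * X 1, -((3:P2 k) * X 0 ^ 2 + C a)]

lemma D'_X0 : D' a (X 0) = (-2 : P2 k) * X 1 := by
  rw [D', mkDerivation_X]; rfl

lemma D'_X1 : D' a (X 1) = -((3:P2 k) * X 0 ^ 2 + C a) := by
  rw [D', mkDerivation_X]; rfl

lemma D'_prod (i j : ℕ) :
    D' a (X 0 ^ i * X 1 ^ j)
      = (j:k) • ((-(3:k)) • (X 0 ^ (i+2) * X 1 ^ (j-1)) - a • (X 0 ^ i * X 1 ^ (j-1)))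
        + (i:k) • ((-2 : k) • (X 0 ^ (i-1) * X 1 ^ (j+1))) := by
  rw [Derivation.leibniz, Derivation.leibniz_pow, Derivation.leibniz_pow, D'_X0, D'_X1]
  match i, j with
  | 0, 0 => simp
  | 0, (j+1) =>
    simp only [Nat.cast_smul_eq_nsmul, smul_eq_mul, nsmul_eq_mul, smul_eq_C_mul, map_neg,
      map_ofNat, Nat.cast_zero, C_0, mul_zero, zero_mul]
    push_cast
    ring
  | (i+1), 0 =>
    simp only [Nat.cast_smul_eq_nsmul, smul_eq_mul, nsmul_eq_mul, smul_eq_C_mul, map_neg,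
      map_ofNat, Nat.cast_zero, C_0, mul_zero, zero_mul]
    push_cast
    ring
  | (i+1), (j+1) =>
    simp only [Nat.cast_smul_eq_nsmul, smul_eq_mul, nsmul_eq_mul, smul_eq_C_mul, map_neg,
      map_ofNat, Nat.add_sub_cancel, C_0]
    push_cast
    ring

end CokerAux
end More3

section More4
namespace CokerAux
variable {k : Type*} [Field k] [CharZero k] (a b : k)

lemma red_D'_prod (i j : ℕ) : red a b (D' a (X 0 ^ i * X 1 ^ j)) = 0 := by
  rw [D'_prod, map_add, map_smul, map_smul, map_sub, map_smul, map_smul, map_smul,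
    red_pow, red_pow, red_pow]
  rcases Nat.even_or_odd j with ⟨t, ht⟩ | ⟨t, ht⟩
  · subst ht
    match t with
    | 0 =>
      simp [show (0:ℕ)+1 = 2*0+1 from rfl, ee_odd]
    | (t+1) =>
      rw [show (t+1) + (t+1) = 2*(t+1) by ring]
      rw [show 2*(t+1) - 1 = 2*t+1 by omega]
      simp [ee_odd]
  · subst ht
    rw [show 2*t+1-1 = 2*t by omega, show 2*t+1+1 = 2*(t+1) by ring, ee_even, ee_even, ee_even]
    have h := keyE a b t i
    push_cast at h ⊢
    linear_combination (norm := module) (-1 : k) • h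

lemma red_D' (p : P2 k) : red a b (D' a p) = 0 := by
  induction p using MvPolynomial.induction_on' with
  | add p q hp hq => rw [map_add, map_add, hp, hq, add_zero]
  | monomial d c =>
    have h1 : (monomial d c : P2 k) = c • (monomial d (1:k)) := by
      rw [smul_monomial, smul_eq_mul, mul_one]
    rw [h1, Derivation.map_smul, map_smul, monomial_eq_prod, red_D'_prod, smul_zero]

end CokerAux
end More4


section Helper
variable {k : Type*} [Field k]

lemma solve3 {M : Type*} [AddCommGroup M] [Module k M] {c s t : k} (hc : c ≠ 0) {x y z : M}
    (h : c • x + s • y + t • z = 0) : x = (-s/c) • y + (-t/c) • z := by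
  apply smul_right_injective M hc
  show c • x = c • _
  rw [smul_add, smul_smul, smul_smul, show c * (-s/c) = -s by field_simp [mul_comm],
    show c * (-t/c) = -t by field_simp [mul_comm]]
  linear_combination (norm := module) h

end Helper

set_option maxHeartbeats 2000000 in
open CokerAux in
theorem coker_del2_a_ne_zero (k : Type*) [Field k] [IsAlgClosed k] [CharZero k] (a b : k)
    (ha : a ≠ 0) (hΔ : 4 * a ^ 3 + 27 * b ^ 2 ≠ 0)
    (A₂ : Type*) [CommRing A₂] [Algebra k A₂]
    (π : MvPolynomial (Fin 2) k →ₐ[k] A₂)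
    (hπ : Function.Surjective π)
    (hker : RingHom.ker π.toRingHom =
      Ideal.span {(X 1 ^ 2 - X 0 ^ 3 - C a * X 0 - C b : MvPolynomial (Fin 2) k)})
    (D : Derivation k A₂ A₂)
    (hx : D (π (X 0)) = π (-2 * X 1))
    (hy : D (π (X 1)) = π (-(3 * X 0 ^ 2 + C a))) :
    ∃ bas : Module.Basis (Fin 2) k (A₂ ⧸ LinearMap.range D.toLinearMap),
      bas 0 = Submodule.Quotient.mk (π 1) ∧
      bas 1 = Submodule.Quotient.mk (π (X 1 ^ 2)) := by
  classical
  -- notation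
  set V : Submodule k A₂ := LinearMap.range D.toLinearMap with hV
  -- commutation of D with the polynomial derivation
  have hXi : ∀ i : Fin 2, D (π (X i)) = π (D' a (X i)) := by
    intro i
    fin_cases i
    · simpa [D'_X0] using hx
    · simpa [D'_X1] using hy
  have hcomm : ∀ p : MvPolynomial (Fin 2) k, D (π p) = π (D' a p) := by
    intro p
    induction p using MvPolynomial.induction_on with
    | C c =>
      rw [← MvPolynomial.algebraMap_eq, Derivation.map_algebraMap, AlgHom.commutes,
        Derivation.map_algebraMap, map_zero]
    | add p q hp hq => rw [map_add, map_add, hp, hq, map_add, map_add]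
    | mul_X p i hp =>
      rw [map_mul, Derivation.leibniz, Derivation.leibniz (D' a) p (X i)]
      simp only [smul_eq_mul, map_add, map_mul]
      rw [hp, hXi]
  have hπF : π (FF a b) = 0 := by
    have : (FF a b : MvPolynomial (Fin 2) k) ∈ RingHom.ker π.toRingHom := by
      rw [hker]; exact Ideal.subset_span rfl
    simpa [RingHom.mem_ker] using this
  have hπmulF : ∀ p : MvPolynomial (Fin 2) k, π (p * FF a b) = 0 := by
    intro p; rw [map_mul, hπF, mul_zero]
  have hDw : ∀ p : MvPolynomial (Fin 2) k, V.mkQ (π (D' a p)) = 0 := by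
    intro p
    rw [Submodule.mkQ_apply, ← hcomm]
    exact (Submodule.Quotient.mk_eq_zero V).mpr ⟨π p, rfl⟩
  -- y² reduction under π
  have hmyg : ∀ i j : ℕ, π (X 0 ^ i * X 1 ^ (j+2)) =
      π (X 0 ^ (i+3) * X 1 ^ j) + a • π (X 0 ^ (i+1) * X 1 ^ j) + b • π (X 0 ^ i * X 1 ^ j) := by
    intro i j
    have hz : (X 0 ^ i * X 1 ^ (j+2) : MvPolynomial (Fin 2) k)
        = (X 0 ^ i * X 1 ^ j) * FF a b
          + (X 0 ^ (i+3) * X 1 ^ j + a • (X 0 ^ (i+1) * X 1 ^ j) + b • (X 0 ^ i * X 1 ^ j)) := by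
      rw [smul_eq_C_mul, smul_eq_C_mul]; unfold FF; ring
    rw [hz, map_add, hπmulF, zero_add, map_add, map_add, map_smul, map_smul]
  have hrel : ∀ m : ℕ, (2*(m:k)+5) • V.mkQ (π (X 0^(m+3)))
      + ((2*(m:k)+3)*a) • V.mkQ (π (X 0^(m+1)))
      + ((2*(m:k)+2)*b) • V.mkQ (π (X 0^(m))) = 0 := by
    intro m
    have h0 := hDw (X 0^(m+1) * X 1^1)
    rw [D'_prod] at h0
    simp only [pow_one, Nat.add_sub_cancel, Nat.sub_self, pow_zero, mul_one, Nat.cast_one,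
      one_smul, Nat.cast_add] at h0
    rw [show m+1+2 = m+3 from rfl] at h0
    have hmy2 : π (X 0^m * X 1^2 : MvPolynomial (Fin 2) k)
        = π (X 0^(m+3)) + a • π (X 0^(m+1)) + b • π (X 0^m) := by
      have := hmyg m 0
      simpa using this
    simp only [map_add, map_sub, map_smul, hmy2] at h0
    push_cast at h0 ⊢
    linear_combination (norm := module) -h0
  have S1 : ∀ n : ℕ, V.mkQ (π (X 0 ^ n))
      = (rr a b n).1 • V.mkQ (π 1) + (rr a b n).2 • V.mkQ (π (X 0)) := by
    intro n
    induction n using Nat.strong_induction_on with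
    | _ n ih =>
      match n with
      | 0 => simp [rr]
      | 1 => simp [rr]
      | 2 =>
        have h0 := hDw (X 1)
        rw [D'_X1] at h0
        have hexp : (-((3:MvPolynomial (Fin 2) k) * X 0 ^ 2 + C a))
            = (-3 : k) • (X 0^2) + (-a) • (1 : MvPolynomial (Fin 2) k) := by
          rw [smul_eq_C_mul, smul_eq_C_mul, map_neg, map_neg, map_ofNat]
          ring
        rw [hexp, map_add, map_smul, map_smul, map_add, map_smul, map_smul] at h0
        have h0' : (-3 : k) • V.mkQ (π (X 0^2)) + (-a) • V.mkQ (π 1)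
            + (0:k) • V.mkQ (π (X 0)) = 0 := by
          linear_combination (norm := module) h0
        have := solve3 (by norm_num : (-3:k) ≠ 0) h0'
        rw [this, rr]
        match_scalars <;> ring
      | (m+3) =>
        have ih1 := ih (m+1) (by omega)
        have ih0 := ih m (by omega)
        have h := hrel m
        rw [ih1, ih0] at h
        have h5 : (2*(m:k)+5) ≠ 0 := by
          have : ((2*m+5 : ℕ) : k) ≠ 0 := Nat.cast_ne_zero.mpr (by omega)
          push_cast at this; exact this
        have := solve3 h5 h
        rw [this, rr]
        simp only [Prod.fst_add, Prod.snd_add, Prod.smul_fst, Prod.smul_snd, smul_eq_mul]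
        push_cast
        match_scalars <;> ring
  have S2 : ∀ j i : ℕ, V.mkQ (π (X 0 ^ i * X 1 ^ j))
      = (ee a b i j).1 • V.mkQ (π 1) + (ee a b i j).2 • V.mkQ (π (X 0)) := by
    intro j
    induction j using Nat.strong_induction_on with
    | _ j ih =>
      match j with
      | 0 =>
        intro i
        rw [pow_zero, mul_one, ee_zero]
        exact S1 i
      | 1 =>
        intro i
        have h0 := hDw (X 0^(i+1) * X 1^0)
        rw [D'_prod] at h0
        simp only [pow_zero, mul_one, Nat.cast_zero, zero_smul, zero_add, Nat.add_sub_cancel,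
          map_smul, smul_smul] at h0
        have hne : ((i:k)+1) * (-2) ≠ 0 := by
          have h' : ((i+1 : ℕ) : k) ≠ 0 := Nat.cast_ne_zero.mpr (by omega)
          push_cast at h'
          exact mul_ne_zero h' (by norm_num)
        rcases smul_eq_zero.mp h0 with h | h
        · exact absurd h (by push_cast; exact hne)
        · have he : ee a b i 1 = (0 : k × k) := ee_odd a b 0 i
          rw [he]
          simpa using h
      | (j+2) =>
        intro i
        have ihj := ih j (by omega)
        rw [hmyg i j, map_add, map_add, map_smul, map_smul, ihj (i+3), ihj (i+1), ihj i,
          ee_step]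
        simp only [Prod.fst_add, Prod.snd_add, Prod.smul_fst, Prod.smul_snd, smul_eq_mul]
        module
  -- general reduction statement
  have S : ∀ p : MvPolynomial (Fin 2) k, V.mkQ (π p)
      = (red a b p).1 • V.mkQ (π 1) + (red a b p).2 • V.mkQ (π (X 0)) := by
    intro p
    induction p using MvPolynomial.induction_on' with
    | add p q hp hq =>
      rw [map_add, map_add, map_add, hp, hq, Prod.fst_add, Prod.snd_add]
      module
    | monomial d c =>
      have h1 : (monomial d c : MvPolynomial (Fin 2) k) = c • (monomial d (1:k)) := by
        rw [smul_monomial, smul_eq_mul, mul_one]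
      rw [h1, map_smul, map_smul, map_smul, red_monomial, monomial_eq_prod, S2 (d 1) (d 0)]
      simp only [Prod.smul_fst, Prod.smul_snd, smul_eq_mul]
      module
  -- red of a linear polynomial
  have hred1 : ∀ α β : k, red a b (C α + C β * X 0) = (α, β) := by
    intro α β
    have e0 : (C α : MvPolynomial (Fin 2) k) = α • (X 0 ^ 0 * X 1 ^ 0) := by
      rw [smul_eq_C_mul]; ring
    have e1 : (C β * X 0 : MvPolynomial (Fin 2) k) = β • (X 0 ^ 1 * X 1 ^ 0) := by
      rw [smul_eq_C_mul]; ring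
    rw [map_add, e0, e1, map_smul, map_smul, red_pow, red_pow, ee_zero, ee_zero]
    simp [rr, Prod.ext_iff]
  -- linear independence of the images of 1 and x in the quotient
  have hind : ∀ α β : k,
      α • V.mkQ (π 1) + β • V.mkQ (π (X 0)) = 0 → α = 0 ∧ β = 0 := by
    intro α β h
    have hmk : V.mkQ (π (C α + C β * X 0)) = 0 := by
      rw [show (C α + C β * X 0 : MvPolynomial (Fin 2) k) = α • 1 + β • X 0 by
        rw [smul_eq_C_mul, smul_eq_C_mul]; ring, map_add, map_smul, map_smul, map_add,
        map_smul, map_smul]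
      exact h
    have hmem : π (C α + C β * X 0) ∈ V := by
      rwa [Submodule.mkQ_apply, Submodule.Quotient.mk_eq_zero] at hmk
    rw [hV, LinearMap.mem_range] at hmem
    obtain ⟨u, hu⟩ := hmem
    obtain ⟨hp, rfl⟩ := hπ u
    have hu' : D (π hp) = π (C α + C β * X 0) := hu
    rw [hcomm] at hu'
    have hkerm : (C α + C β * X 0 - D' a hp : MvPolynomial (Fin 2) k)
        ∈ RingHom.ker π.toRingHom := by
      simp only [RingHom.mem_ker, AlgHom.toRingHom_eq_coe, RingHom.coe_coe, map_sub, hu',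
        sub_self]
    rw [hker, Ideal.mem_span_singleton'] at hkerm
    obtain ⟨g, hg⟩ := hkerm
    have hg' : g * FF a b = C α + C β * X 0 - D' a hp := hg
    have hz : red a b (C α + C β * X 0) = 0 := by
      have hh : (C α + C β * X 0 : MvPolynomial (Fin 2) k) = g * (FF a b) + D' a hp := by
        linear_combination -hg'
      rw [hh, map_add, red_mul_FF, red_D', add_zero]
    rw [hred1] at hz
    exact ⟨congrArg Prod.fst hz, congrArg Prod.snd hz⟩
  -- value of y² in the quotient
  have hr3 : rr a b 3 = (-((2*(0:k)+3) * a) / (2*(0:k)+5)) • rr a b 1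
      + (-((2*(0:k)+2) * b) / (2*(0:k)+5)) • rr a b 0 := by
    have h3 : rr a b (0+3) = (-((2*((0:ℕ):k)+3) * a) / (2*((0:ℕ):k)+5)) • rr a b (0+1)
        + (-((2*((0:ℕ):k)+2) * b) / (2*((0:ℕ):k)+5)) • rr a b 0 := by conv_lhs => rw [rr]
    simpa using h3
  have he02 : ee a b 0 2 = ((3*b/5 : k), (2*a/5 : k)) := by
    have h1 : ee a b 0 2 = sE a b 1 0 := by
      rw [show (2:ℕ) = 2*1 from rfl, ee_even]
    rw [h1, show sE a b 1 0 = sE a b 0 3 + a • sE a b 0 1 + b • sE a b 0 0 from rfl]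
    show rr a b 3 + a • rr a b 1 + b • rr a b 0 = _
    rw [hr3]
    simp only [rr]
    norm_num [Prod.ext_iff]
    constructor <;> ring
  have hy2 : V.mkQ (π (X 1 ^ 2)) = (3*b/5) • V.mkQ (π 1) + (2*a/5) • V.mkQ (π (X 0)) := by
    have h := S2 2 0
    simp only [pow_zero, one_mul] at h
    rw [h, he02]
  have hane : (2*a/5 : k) ≠ 0 := by
    apply div_ne_zero (mul_ne_zero (by norm_num) ha) (by norm_num)
  -- linear independence of (1, y²)
  have hli : LinearIndependent k ![V.mkQ (π 1), V.mkQ (π (X 1 ^ 2))] := by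
    rw [LinearIndependent.pair_iff]
    intro s t hst
    rw [hy2] at hst
    have h0 : (s + t*(3*b/5)) • V.mkQ (π 1) + (t*(2*a/5)) • V.mkQ (π (X 0)) = 0 := by
      linear_combination (norm := module) hst
    obtain ⟨h1, h2⟩ := hind _ _ h0
    have ht : t = 0 := by
      rcases mul_eq_zero.mp h2 with h | h
      · exact h
      · exact absurd h hane
    refine ⟨?_, ht⟩
    rw [ht] at h1
    simpa using h1
  -- spanning
  have hsp : ⊤ ≤ Submodule.span k (Set.range ![V.mkQ (π 1), V.mkQ (π (X 1 ^ 2))]) := by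
    have hv0 : V.mkQ (π 1) ∈ Submodule.span k (Set.range ![V.mkQ (π 1), V.mkQ (π (X 1 ^ 2))]) :=
      Submodule.subset_span ⟨0, rfl⟩
    have hv2 : V.mkQ (π (X 1 ^ 2))
        ∈ Submodule.span k (Set.range ![V.mkQ (π 1), V.mkQ (π (X 1 ^ 2))]) :=
      Submodule.subset_span ⟨1, rfl⟩
    have hv1 : V.mkQ (π (X 0))
        ∈ Submodule.span k (Set.range ![V.mkQ (π 1), V.mkQ (π (X 1 ^ 2))]) := by
      rw [← Submodule.smul_mem_iff _ hane]
      have heq : (2*a/5) • V.mkQ (π (X 0))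
          = V.mkQ (π (X 1 ^ 2)) - (3*b/5) • V.mkQ (π 1) := by
        rw [hy2]; module
      rw [heq]
      exact sub_mem hv2 (Submodule.smul_mem _ _ hv0)
    rintro q -
    obtain ⟨w, rfl⟩ := V.mkQ_surjective q
    obtain ⟨p, rfl⟩ := hπ w
    rw [S p]
    exact add_mem (Submodule.smul_mem _ _ hv0) (Submodule.smul_mem _ _ hv1)
  refine ⟨Module.Basis.mk hli hsp, ?_, ?_⟩
  · rw [Module.Basis.mk_apply]
    simp [Submodule.mkQ_apply]
  · rw [Module.Basis.mk_apply]
    simp [Submodule.mkQ_apply]
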